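/- The weak order poset of (p,q)-clans with p,q ≥ 1 and p+q=n has exactly C(n,p) maximal elements, namely those clans whose underlying involution is the identity, one for each choice of p positions assigned '+' and q positions assigned '−'. -/

import Mathlib

/-- The number of inversions (Coxeter length) of a permutation of `Fin n`. -/
def invNum {n : ℕ} (w : Equiv.Perm (Fin n)) : ℕ :=
  (Finset.univ.filter fun p : Fin n × Fin n => p.1 < p.2 ∧ w p.2 < w p.1).card

/-- The number of 2-cycles of an involution. -/
def numTwoCycles {n : ℕ} (π : Equiv.Perm (Fin n)) : ℕ :=
  (Finset.univ.filter fun i : Fin n => π i ≠ i).card / 2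

/-- A `(p,q)`-clan: an involution of `S_{p+q}` together with a sign (`true` = `+`,
`false` = `−`) attached to each fixed point, such that `#(+) − #(−) = p − q`.
(Non-fixed points are assigned the junk value `false`.) -/
structure Clan (p q : ℕ) where
  π : Equiv.Perm (Fin (p + q))
  invol : π * π = 1
  sign : Fin (p + q) → Bool
  signFix : ∀ i, π i ≠ i → sign i = false
  charge : (Finset.univ.filter fun i => π i = i ∧ sign i = true).card + q =
    (Finset.univ.filter fun i => π i = i ∧ sign i = false).card + p

/-- The covering relation `c' ⋖ c` of the weak order on `(p,q)`-clans, at consecutive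
positions `a`, `b = a+1`.  Type I (IA/IB/IC): `c.π = s c'.π s` with
`ℓ(c.π) = ℓ(c'.π) − 2`, the signs carried along by `s = (a,b)`.  Type II: `c'` has the
2-cycle `(a,b)`, which is replaced in `c` by two oppositely-signed fixed points, all other
signs unchanged. -/
def ClanCov {p q : ℕ} (a b : Fin (p + q)) (c' c : Clan p q) : Prop :=
  (b : ℕ) = (a : ℕ) + 1 ∧
  ((c.π = Equiv.swap a b * c'.π * Equiv.swap a b ∧ invNum c.π + 2 = invNum c'.π ∧
      ∀ x, c'.π x = x → c.sign (Equiv.swap a b x) = c'.sign x) ∨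
    (c'.π a = b ∧ c.π = Equiv.swap a b * c'.π ∧ c.sign a = !c.sign b ∧
      ∀ x, x ≠ a → x ≠ b → c.sign x = c'.sign x))

lemma swap_lt_swap {n : ℕ} {a b : Fin n} (hab : (b:ℕ) = (a:ℕ) + 1)
    {x y : Fin n} (hxy : x < y) (hne : ¬(x = a ∧ y = b)) :
    Equiv.swap a b x < Equiv.swap a b y := by
  rw [Equiv.swap_apply_def, Equiv.swap_apply_def]
  rw [Fin.lt_def] at hxy ⊢
  rw [not_and_or] at hne
  rcases hne with h | h <;>
  split_ifs with h1 h2 h3 h4 h5 <;>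
    simp only [Fin.ext_iff] at * <;> omega

lemma invNum_mul_swap {n : ℕ} (w : Equiv.Perm (Fin n)) {a b : Fin n}
    (hab : (b:ℕ) = (a:ℕ) + 1) (h : w b < w a) :
    invNum (w * Equiv.swap a b) + 1 = invNum w := by
  have hablt : a < b := Fin.lt_def.mpr (by omega)
  set s := Equiv.swap a b with hs
  have hmem : (a, b) ∈ Finset.univ.filter
      (fun p : Fin n × Fin n => p.1 < p.2 ∧ w p.2 < w p.1) := by
    simp [hablt, h]
  have key : (Finset.univ.filter fun p : Fin n × Fin n => p.1 < p.2 ∧ (w * s) p.2 < (w * s) p.1)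
      = ((Finset.univ.filter fun p : Fin n × Fin n => p.1 < p.2 ∧ w p.2 < w p.1).erase (a,b)).image
        (fun p => (s p.1, s p.2)) := by
    ext p
    simp only [Finset.mem_image, Finset.mem_erase, Finset.mem_filter, Finset.mem_univ, true_and]
    simp only [Equiv.Perm.mul_apply]
    constructor
    · rintro ⟨h1, h2⟩
      have hne : ¬(p.1 = a ∧ p.2 = b) := by
        rintro ⟨e1, e2⟩
        rw [e1, e2] at h2
        simp only [hs, Equiv.swap_apply_left, Equiv.swap_apply_right] at h2
        exact absurd h (not_lt.mpr h2.le)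
      refine ⟨(s p.1, s p.2), ⟨?_, ?_, ?_⟩, ?_⟩
      · intro hcon
        have e1 : s p.1 = a := congrArg Prod.fst hcon
        have e2 : s p.2 = b := congrArg Prod.snd hcon
        have e1' : p.1 = b := s.injective (by rw [e1]; simp [hs])
        have e2' : p.2 = a := s.injective (by rw [e2]; simp [hs])
        rw [e1', e2'] at h1
        exact absurd h1 (not_lt.mpr hablt.le)
      · exact swap_lt_swap hab h1 hne
      · exact h2
      · simp [hs]
    · rintro ⟨q, ⟨hqne, hq1, hq2⟩, rfl⟩
      have hne : ¬(q.1 = a ∧ q.2 = b) := by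
        rintro ⟨e1, e2⟩; exact hqne (Prod.ext e1 e2)
      refine ⟨swap_lt_swap hab hq1 hne, ?_⟩
      simpa [hs] using hq2
  have hinj : Function.Injective (fun p : Fin n × Fin n => (s p.1, s p.2)) := by
    intro p q hpq
    simp only [Prod.mk.injEq] at hpq
    exact Prod.ext (s.injective hpq.1) (s.injective hpq.2)
  rw [invNum, key, Finset.card_image_of_injective _ hinj, Finset.card_erase_of_mem hmem]
  rw [invNum]
  have : 0 < (Finset.univ.filter fun p : Fin n × Fin n => p.1 < p.2 ∧ w p.2 < w p.1).card :=
    Finset.card_pos.mpr ⟨_, hmem⟩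
  omega

lemma invNum_inv {n : ℕ} (w : Equiv.Perm (Fin n)) : invNum w⁻¹ = invNum w := by
  rw [invNum, invNum]
  refine Finset.card_bij' (fun p _ => (w⁻¹ p.2, w⁻¹ p.1)) (fun q _ => (w q.2, w q.1)) ?_ ?_ ?_ ?_
  · rintro p hp
    simp only [Finset.mem_filter, Finset.mem_univ, true_and] at hp ⊢
    refine ⟨hp.2, ?_⟩
    simpa using hp.1
  · rintro q hq
    simp only [Finset.mem_filter, Finset.mem_univ, true_and] at hq ⊢
    exact ⟨hq.2, by simpa using hq.1⟩
  · intro p hp; simp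
  · intro q hq; simp

lemma invNum_swap_mul {n : ℕ} (w : Equiv.Perm (Fin n)) {a b : Fin n}
    (hab : (b:ℕ) = (a:ℕ) + 1) (h : w⁻¹ b < w⁻¹ a) :
    invNum (Equiv.swap a b * w) + 1 = invNum w := by
  have : invNum (Equiv.swap a b * w) = invNum (w⁻¹ * Equiv.swap a b) := by
    rw [← invNum_inv (w⁻¹ * Equiv.swap a b)]
    simp [mul_inv_rev]
  rw [this, invNum_mul_swap w⁻¹ hab h, invNum_inv]

lemma exists_descent {n : ℕ} {π : Equiv.Perm (Fin n)} (h : π ≠ 1) :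
    ∃ a b : Fin n, (b:ℕ) = (a:ℕ) + 1 ∧ π b < π a := by
  by_contra hc
  push_neg at hc
  apply h
  have hsm : StrictMono π := by
    cases n with
    | zero => intro x; exact x.elim0
    | succ m =>
      rw [Fin.strictMono_iff_lt_succ]
      intro i
      have hab : ((i.succ : Fin (m+1)):ℕ) = ((i.castSucc : Fin (m+1)):ℕ) + 1 := by simp
      have hle := hc i.castSucc i.succ hab
      have hne : π i.castSucc ≠ π i.succ := by
        intro he
        have := π.injective he
        simp only [Fin.ext_iff, Fin.coe_castSucc, Fin.val_succ] at this
        omega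
      exact lt_of_le_of_ne hle hne
  have hsm' : StrictMono (⇑π⁻¹ : Fin n → Fin n) := by
    intro u v huv
    by_contra hcon
    push_neg at hcon
    have := hsm.monotone hcon
    simp only [Equiv.Perm.inv_def, Equiv.apply_symm_apply] at this
    exact absurd huv (not_lt.mpr this)
  have inst : WellFoundedLT (Fin n) := inferInstance
  ext x
  have h1 : x ≤ π x := @StrictMono.le_apply (Fin n) _ inst _ hsm x
  have h2 : x ≤ π⁻¹ x := @StrictMono.le_apply (Fin n) _ inst _ hsm' x
  have h3 : π x ≤ x := by
    have := hsm.monotone h2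
    simpa using this
  exact le_antisymm h3 h1

lemma invNum_one {n : ℕ} : invNum (1 : Equiv.Perm (Fin n)) = 0 := by
  rw [invNum, Finset.card_eq_zero]
  ext p
  simp only [Finset.mem_filter, Finset.mem_univ, true_and, Finset.notMem_empty, iff_false]
  rintro ⟨h1, h2⟩
  simp only [Equiv.Perm.one_apply] at h2
  exact absurd h1 (not_lt.mpr h2.le)

lemma Clan.ext' {p q : ℕ} {c1 c2 : Clan p q} (h1 : c1.π = c2.π) (h2 : c1.sign = c2.sign) :
    c1 = c2 := by
  cases c1; cases c2
  cases h1; cases h2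
  rfl


lemma Clan.pi_pi {p q : ℕ} (c : Clan p q) (y : Fin (p+q)) : c.π (c.π y) = y := by
  have h : (c.π * c.π) y = (1 : Equiv.Perm (Fin (p+q))) y := by rw [c.invol]
  simpa using h

/-- The conjugate clan `s c s` for `s = swap a b`. -/
def conjClan {p q : ℕ} (c : Clan p q) (a b : Fin (p + q)) : Clan p q where
  π := Equiv.swap a b * c.π * Equiv.swap a b
  invol := by
    set s := Equiv.swap a b with hs
    have hss : s * s = 1 := Equiv.swap_mul_self a b
    have h : (s * c.π * s) * (s * c.π * s) = s * c.π * (s * s) * c.π * s := by group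
    rw [h, hss, mul_one]
    have h2 : s * c.π * c.π * s = s * (c.π * c.π) * s := by group
    rw [h2, c.invol, mul_one, hss]
  sign := fun y => c.sign (Equiv.swap a b y)
  signFix := by
    intro y hy
    apply c.signFix
    intro hcon
    apply hy
    simp only [Equiv.Perm.mul_apply, hcon, Equiv.swap_apply_self]
  charge := by
    set s := Equiv.swap a b with hs
    have himg : ∀ t : Bool,
        (Finset.univ.filter fun i => (s * c.π * s) i = i ∧ c.sign (s i) = t)
          = (Finset.univ.filter fun i => c.π i = i ∧ c.sign i = t).image s := by
      intro t
      ext i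
      simp only [Finset.mem_image, Finset.mem_filter, Finset.mem_univ, true_and]
      simp only [Equiv.Perm.mul_apply]
      constructor
      · rintro ⟨h1, h2⟩
        refine ⟨s i, ⟨?_, h2⟩, by simp [hs]⟩
        have := congrArg s h1
        simpa [hs] using this
      · rintro ⟨j, ⟨hj1, hj2⟩, rfl⟩
        refine ⟨by simp [hs, hj1], by simpa [hs] using hj2⟩
    have := c.charge
    rw [himg true, himg false, Finset.card_image_of_injective _ s.injective,
      Finset.card_image_of_injective _ s.injective]
    exact this

lemma conjClan_cov {p q : ℕ} (c : Clan p q) (a b : Fin (p + q)) (hab : (b:ℕ) = (a:ℕ) + 1)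
    (hdes : c.π b < c.π a) (hII : c.π a ≠ b) : ClanCov a b c (conjClan c a b) := by
  refine ⟨hab, Or.inl ⟨rfl, ?_, ?_⟩⟩
  · show invNum (Equiv.swap a b * c.π * Equiv.swap a b) + 2 = invNum c.π
    have hπinv : c.π⁻¹ = c.π := inv_eq_of_mul_eq_one_right c.invol
    have h1 : c.π⁻¹ b < c.π⁻¹ a := by rw [hπinv]; exact hdes
    have L1 := invNum_swap_mul c.π hab h1
    have hne : ¬(c.π b = a ∧ c.π a = b) := fun h => hII h.2
    have h2 : (Equiv.swap a b * c.π) b < (Equiv.swap a b * c.π) a := by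
      simp only [Equiv.Perm.mul_apply]
      exact swap_lt_swap hab hdes hne
    have L2 := invNum_mul_swap (Equiv.swap a b * c.π) hab h2
    omega
  · intro x _
    show c.sign (Equiv.swap a b (Equiv.swap a b x)) = c.sign x
    rw [Equiv.swap_apply_self]

/-- Type II: replace a consecutive 2-cycle by two oppositely signed fixed points. -/
def typeIIClan {p q : ℕ} (c : Clan p q) (a b : Fin (p + q)) (hab : (b:ℕ) = (a:ℕ) + 1)
    (hII : c.π a = b) : Clan p q where
  π := Equiv.swap a b * c.π
  invol := by
    set s := Equiv.swap a b with hs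
    have hπb : c.π b = a := by rw [← hII, c.pi_pi]
    have hne : a ≠ b := by simp [Fin.ext_iff]; omega
    have comm : s * c.π = c.π * s := by
      apply Equiv.ext
      intro x
      simp only [Equiv.Perm.mul_apply]
      rcases eq_or_ne x a with rfl | hxa
      · rw [hII]
        simp [hs, hπb]
      · rcases eq_or_ne x b with rfl | hxb
        · rw [hπb]
          simp [hs, hII]
        · have h1 : c.π x ≠ a := by
            intro hcon
            apply hxb
            have h := congrArg c.π hcon
            rw [c.pi_pi, hII] at h
            exact h
          have h2 : c.π x ≠ b := by
            intro hcon
            apply hxa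
            have h := congrArg c.π hcon
            rw [c.pi_pi, hπb] at h
            exact h
          rw [hs, Equiv.swap_apply_of_ne_of_ne hxa hxb,
            Equiv.swap_apply_of_ne_of_ne h1 h2]
    have h : (s * c.π) * (s * c.π) = s * (c.π * s) * c.π := by group
    rw [h, ← comm]
    have h2 : s * (s * c.π) * c.π = (s * s) * (c.π * c.π) := by group
    rw [h2, Equiv.swap_mul_self, c.invol, one_mul]
  sign := fun y => if y = a then true else if y = b then false else c.sign y
  signFix := by
    intro y hy
    have hπb : c.π b = a := by rw [← hII, c.pi_pi]
    have hsa : (Equiv.swap a b * c.π) a = a := by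
      simp [Equiv.Perm.mul_apply, hII]
    have hsb : (Equiv.swap a b * c.π) b = b := by
      simp [Equiv.Perm.mul_apply, hπb]
    have hya : y ≠ a := fun h => hy (h ▸ hsa)
    have hyb : y ≠ b := fun h => hy (h ▸ hsb)
    simp only [if_neg hya, if_neg hyb]
    apply c.signFix
    intro hcon
    apply hy
    simp [Equiv.Perm.mul_apply, hcon, Equiv.swap_apply_of_ne_of_ne hya hyb]
  charge := by
    have hπb : c.π b = a := by rw [← hII, c.pi_pi]
    have hne : a ≠ b := by simp [Fin.ext_iff]; omega
    have hsa : (Equiv.swap a b * c.π) a = a := by simp [Equiv.Perm.mul_apply, hII]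
    have hsb : (Equiv.swap a b * c.π) b = b := by simp [Equiv.Perm.mul_apply, hπb]
    have hfixiff : ∀ i, i ≠ a → i ≠ b → ((Equiv.swap a b * c.π) i = i ↔ c.π i = i) := by
      intro i hia hib
      simp only [Equiv.Perm.mul_apply]
      constructor
      · intro h
        have := congrArg (Equiv.swap a b) h
        rw [Equiv.swap_apply_self, Equiv.swap_apply_of_ne_of_ne hia hib] at this
        exact this
      · intro h
        rw [h, Equiv.swap_apply_of_ne_of_ne hia hib]
    have htrue : (Finset.univ.filter fun i =>
          (Equiv.swap a b * c.π) i = i ∧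
            (if i = a then true else if i = b then false else c.sign i) = true)
        = insert a (Finset.univ.filter fun i => c.π i = i ∧ c.sign i = true) := by
      ext i
      simp only [Finset.mem_insert, Finset.mem_filter, Finset.mem_univ, true_and]
      rcases eq_or_ne i a with rfl | hia
      · simp [hsa]
      · rcases eq_or_ne i b with rfl | hib
        · simp [hne.symm, if_neg hne.symm, hπb, hne]
        · rw [if_neg hia, if_neg hib, hfixiff i hia hib]
          simp [hia]
    have hfalse : (Finset.univ.filter fun i =>
          (Equiv.swap a b * c.π) i = i ∧
            (if i = a then true else if i = b then false else c.sign i) = false)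
        = insert b (Finset.univ.filter fun i => c.π i = i ∧ c.sign i = false) := by
      ext i
      simp only [Finset.mem_insert, Finset.mem_filter, Finset.mem_univ, true_and]
      rcases eq_or_ne i a with rfl | hia
      · simp [hne, hII, hne.symm]
      · rcases eq_or_ne i b with rfl | hib
        · simp [hsb, if_neg hne.symm, hπb, hne.symm]
        · rw [if_neg hia, if_neg hib, hfixiff i hia hib]
          simp [hib]
    rw [htrue, hfalse, Finset.card_insert_of_notMem, Finset.card_insert_of_notMem]
    · have := c.charge
      omega
    · simp only [Finset.mem_filter, Finset.mem_univ, true_and, not_and]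
      intro hcon
      exact absurd hcon (by rw [hπb]; exact hne)
    · simp only [Finset.mem_filter, Finset.mem_univ, true_and, not_and]
      intro hcon
      exact absurd hcon (by rw [hII]; exact hne.symm)

lemma typeIIClan_cov {p q : ℕ} (c : Clan p q) (a b : Fin (p + q)) (hab : (b:ℕ) = (a:ℕ) + 1)
    (hII : c.π a = b) : ClanCov a b c (typeIIClan c a b hab hII) := by
  have hne : a ≠ b := by simp [Fin.ext_iff]; omega
  refine ⟨hab, Or.inr ⟨hII, rfl, ?_, ?_⟩⟩
  · show (if a = a then true else _) = !(if b = a then true else if b = b then false else c.sign b)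
    rw [if_pos rfl, if_neg hne.symm, if_pos rfl]
    rfl
  · intro x hxa hxb
    show (if x = a then true else if x = b then false else c.sign x) = c.sign x
    rw [if_neg hxa, if_neg hxb]

lemma clan_one_sign_card {p q : ℕ} (c : Clan p q) (h : c.π = 1) :
    (Finset.univ.filter fun i => c.sign i = true).card = p := by
  have hch := c.charge
  rw [h] at hch
  simp only [Equiv.Perm.one_apply, true_and] at hch
  have htot := Finset.card_filter_add_card_filter_not
    (s := (Finset.univ : Finset (Fin (p+q)))) (p := fun i => c.sign i = true)
  simp only [Bool.not_eq_true, Finset.card_univ, Fintype.card_fin] at htot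
  omega

/-- The clan with identity involution and given `+`-set. -/
def idClan (p q : ℕ) (A : Finset (Fin (p + q))) (hA : A.card = p) : Clan p q where
  π := 1
  invol := one_mul 1
  sign := fun i => decide (i ∈ A)
  signFix := fun i hi => absurd rfl hi
  charge := by
    simp only [Equiv.Perm.one_apply, true_and]
    have h1 : (Finset.univ.filter fun i : Fin (p+q) => decide (i ∈ A) = true) = A := by
      ext i; simp
    have h2 : (Finset.univ.filter fun i : Fin (p+q) => decide (i ∈ A) = false)
        = Finset.univ \ A := by
      ext i; simp
    rw [h1, h2, hA, Finset.card_sdiff_of_subset (Finset.subset_univ A)]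
    simp only [Finset.card_univ, Fintype.card_fin, hA]
    omega

def clanEquiv (p q : ℕ) : {c : Clan p q // c.π = 1} ≃ {A : Finset (Fin (p + q)) // A.card = p} where
  toFun c := ⟨Finset.univ.filter fun i => c.1.sign i = true, clan_one_sign_card c.1 c.2⟩
  invFun A := ⟨idClan p q A.1 A.2, rfl⟩
  left_inv c := by
    apply Subtype.ext
    apply Clan.ext'
    · rw [c.2]; rfl
    · funext i
      show decide (i ∈ Finset.univ.filter fun j => c.1.sign j = true) = c.1.sign i
      by_cases h : c.1.sign i = true <;> simp [h]
  right_inv A := by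
    apply Subtype.ext
    show (Finset.univ.filter fun i => decide (i ∈ A.1) = true) = A.1
    ext i; simp

lemma count_clans (p q : ℕ) :
    Nat.card {c : Clan p q // c.π = 1} = Nat.choose (p + q) p := by
  rw [Nat.card_congr (clanEquiv p q), Nat.card_eq_fintype_card]
  simpa using Fintype.card_finset_len (α := Fin (p+q)) p

/-- The weak order poset of `(p,q)`-clans (`p, q ≥ 1`) has exactly `C(p+q, p)` maximal
elements, namely exactly the clans whose underlying involution is the identity (one for
each choice of `p` positions marked `+` and `q` positions marked `−`). -/
theorem stmt18 (p q : ℕ) (hp : 1 ≤ p) (hq : 1 ≤ q) :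
    {c : Clan p q | ∀ (a b : Fin (p + q)) (c'' : Clan p q), ¬ ClanCov a b c c''} =
      {c : Clan p q | c.π = 1} ∧
    Nat.card {c : Clan p q // c.π = 1} = Nat.choose (p + q) p := by
  refine ⟨?_, count_clans p q⟩
  ext c
  simp only [Set.mem_setOf_eq]
  constructor
  · intro hmax
    by_contra hne
    obtain ⟨a, b, hab, hdes⟩ := exists_descent hne
    by_cases hII : c.π a = b
    · exact hmax a b _ (typeIIClan_cov c a b hab hII)
    · exact hmax a b _ (conjClan_cov c a b hab hdes hII)
  · rintro h1 a b c'' ⟨hab, hcov⟩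
    rcases hcov with ⟨-, hlen, -⟩ | ⟨hπa, -, -, -⟩
    · rw [h1, invNum_one] at hlen
      omega
    · rw [h1] at hπa
      simp only [Equiv.Perm.one_apply] at hπa
      rw [hπa] at hab
      omega
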